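/- arXiv:2312.00011 — 2 statements merged into one kernel-verified Lean document; each statement's English description precedes it below -/
import Mathlib

section
/- For all real h and r, the derivative of Owen's T function with respect to h satisfies ∂T(h,r)/∂h = −φ(h) (Φ(rh) − 1/2), where T(h,r) = (1/(2π)) ∫_0^r e^{-h²(1+x²)/2}/(1+x²) dx. -/
open Real MeasureTheory

/-- Owen's T function. -/
noncomputable def OwenT (h r : ℝ) : ℝ :=
  (1 / (2 * Real.pi)) * ∫ x in (0:ℝ)..r, Real.exp (-h ^ 2 * (1 + x ^ 2) / 2) / (1 + x ^ 2)

/-- Standard normal density. -/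
noncomputable def stdPdf (t : ℝ) : ℝ := Real.exp (-t ^ 2 / 2) / Real.sqrt (2 * Real.pi)

/-- Standard normal cdf. -/
noncomputable def stdCdf (x : ℝ) : ℝ := ∫ t in Set.Iic x, stdPdf t

open Set intervalIntegral

lemma gauss_int : Integrable (fun t : ℝ => Real.exp (-t ^ 2 / 2)) := by
  have := integrable_exp_neg_mul_sq (b := (1/2 : ℝ)) (by norm_num)
  convert this using 2 with t
  ring_nf

lemma stdPdf_int : Integrable stdPdf := by
  unfold stdPdf
  exact gauss_int.div_const _

lemma sqrt2pi_pos : (0:ℝ) < Real.sqrt (2 * Real.pi) :=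
  Real.sqrt_pos.mpr (by positivity)

lemma total_gauss : ∫ t : ℝ, Real.exp (-t ^ 2 / 2) = Real.sqrt (2 * Real.pi) := by
  have := integral_gaussian (1/2 : ℝ)
  rw [show π / (1/2:ℝ) = 2 * π by ring] at this
  rw [← this]
  congr 1 with t
  ring_nf

lemma stdCdf_zero : stdCdf 0 = 1 / 2 := by
  have heven : ∀ x : ℝ, stdPdf (-x) = stdPdf x := by
    intro x; unfold stdPdf; ring_nf
  have h1 : ∫ t in Iic (0:ℝ), stdPdf t = ∫ t in Ioi (0:ℝ), stdPdf t := by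
    have := integral_comp_neg_Ioi (0:ℝ) stdPdf
    simp only [heven, neg_zero] at this
    exact this.symm
  have h2 := intervalIntegral.integral_Iic_add_Ioi (b := (0:ℝ)) (f := stdPdf)
    stdPdf_int.integrableOn stdPdf_int.integrableOn
  have h3 : ∫ t : ℝ, stdPdf t = 1 := by
    unfold stdPdf
    rw [MeasureTheory.integral_div, total_gauss, div_self sqrt2pi_pos.ne']
  unfold stdCdf
  rw [h1] at h2 ⊢
  linarith [h2, h3]

lemma deriv_inner (h r : ℝ) :
    HasDerivAt (fun h' => ∫ x in (0:ℝ)..r, Real.exp (-h' ^ 2 * (1 + x ^ 2) / 2) / (1 + x ^ 2))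
      (∫ x in (0:ℝ)..r, -h * Real.exp (-h ^ 2 * (1 + x ^ 2) / 2)) h := by
  have key := intervalIntegral.hasDerivAt_integral_of_dominated_loc_of_deriv_le
    (F := fun h' x => Real.exp (-h' ^ 2 * (1 + x ^ 2) / 2) / (1 + x ^ 2))
    (F' := fun h' x => -h' * Real.exp (-h' ^ 2 * (1 + x ^ 2) / 2))
    (x₀ := h) (a := (0:ℝ)) (b := r) (μ := volume) (bound := fun _ => |h| + 1)
    (s := Metric.ball h 1) (Metric.ball_mem_nhds h one_pos)
    ?_ ?_ ?_ ?_ ?_ ?_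
  · exact key.2
  · filter_upwards with h'
    exact (Continuous.aestronglyMeasurable (by fun_prop (disch := intro x; positivity))).restrict
  · apply Continuous.intervalIntegrable
    fun_prop (disch := intro x; positivity)
  · exact (Continuous.aestronglyMeasurable (by fun_prop)).restrict
  · filter_upwards with x _ h' hh'
    have h1 : Real.exp (-h' ^ 2 * (1 + x ^ 2) / 2) ≤ 1 := by
      apply Real.exp_le_one_iff.mpr
      nlinarith [sq_nonneg h', sq_nonneg x, sq_nonneg (h'*x)]
    have h2 : |h'| ≤ |h| + 1 := by
      have := abs_sub_abs_le_abs_sub h' h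
      rw [Metric.mem_ball, Real.dist_eq] at hh'
      linarith [hh'.le]
    calc ‖-h' * Real.exp (-h' ^ 2 * (1 + x ^ 2) / 2)‖
        = |h'| * Real.exp (-h' ^ 2 * (1 + x ^ 2) / 2) := by
          rw [norm_mul, norm_neg, Real.norm_eq_abs, Real.norm_eq_abs,
            abs_of_pos (Real.exp_pos _)]
      _ ≤ (|h| + 1) * 1 := by
          apply mul_le_mul h2 h1 (Real.exp_pos _).le (by positivity)
      _ = |h| + 1 := mul_one _
  · exact intervalIntegrable_const
  · filter_upwards with x _ h' _
    have hu : HasDerivAt (fun y : ℝ => -y ^ 2 * (1 + x ^ 2) / 2) (-h' * (1 + x ^ 2)) h' := by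
      have := (hasDerivAt_pow 2 h')
      have := ((this.neg.mul_const (1 + x ^ 2)).div_const 2)
      refine this.congr_deriv ?_
      ring_nf
    have := (hu.exp).div_const (1 + x ^ 2)
    refine this.congr_deriv ?_
    have hx : (1:ℝ) + x ^ 2 ≠ 0 := by positivity
    field_simp

theorem OwenT_deriv (h r : ℝ) :
    HasDerivAt (fun h' => OwenT h' r) (-(stdPdf h) * (stdCdf (r * h) - 1 / 2)) h := by
  have key := (deriv_inner h r).const_mul (1 / (2 * Real.pi))
  have heq : (1 / (2 * Real.pi)) * ∫ x in (0:ℝ)..r, -h * Real.exp (-h ^ 2 * (1 + x ^ 2) / 2)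
      = -(stdPdf h) * (stdCdf (r * h) - 1 / 2) := by
    rcases eq_or_ne h 0 with rfl | hne
    · simp [stdCdf_zero]
    · have split : ∀ x : ℝ, -h * Real.exp (-h ^ 2 * (1 + x ^ 2) / 2)
          = (-h * Real.exp (-h ^ 2 / 2)) * Real.exp (-(h * x) ^ 2 / 2) := by
        intro x
        rw [mul_assoc, ← Real.exp_add]
        ring_nf
      simp_rw [split]
      rw [intervalIntegral.integral_const_mul]
      have sub : (∫ x in (0:ℝ)..r, Real.exp (-(h * x) ^ 2 / 2))
          = h⁻¹ * ∫ t in (0:ℝ)..(h * r), Real.exp (-t ^ 2 / 2) := by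
        have := intervalIntegral.integral_comp_mul_left
          (a := (0:ℝ)) (b := r) (f := fun t => Real.exp (-t ^ 2 / 2)) (c := h) hne
        simpa [mul_zero] using this
      rw [sub]
      have cdf : stdCdf (r * h) - 1 / 2
          = (∫ t in (0:ℝ)..(r * h), Real.exp (-t ^ 2 / 2)) / Real.sqrt (2 * Real.pi) := by
        rw [← stdCdf_zero]
        unfold stdCdf
        rw [intervalIntegral.integral_Iic_sub_Iic stdPdf_int.integrableOn
          stdPdf_int.integrableOn]
        unfold stdPdf
        rw [intervalIntegral.integral_div]
      rw [cdf, mul_comm r h]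
      unfold stdPdf
      have hsq : Real.sqrt (2 * π) * Real.sqrt (2 * π) = 2 * π :=
        Real.mul_self_sqrt (by positivity)
      rw [← neg_div, div_mul_div_comm, hsq]
      field_simp
  rw [← heq]
  unfold OwenT
  exact key
end

section
/- For all real h and finite r, Owen's T function satisfies T(h,r) = arctan(r)/(2π) − (r/(2π(1+r²))) Σ_{k=0}^∞ ((2k)!!/(2k+1)!!) P(k+1, q) (r²/(1+r²))^k, where q = (1+r²)h²/2. -/
open Real MeasureTheory

/-- Lower regularized incomplete gamma function P(a,x) = γ(a,x)/Γ(a). -/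
noncomputable def regGammaP (a x : ℝ) : ℝ :=
  (∫ t in (0:ℝ)..x, t ^ (a - 1) * Real.exp (-t)) / Real.Gamma a

/-- (2k)!! = 2^k k! -/
noncomputable def evenDF (k : ℕ) : ℝ := 2 ^ k * k.factorial

/-- (2k+1)!! = (2k+1)!/(2^k k!) -/
noncomputable def oddDF (k : ℕ) : ℝ := (2 * k + 1).factorial / (2 ^ k * k.factorial)

lemma oddDF_pos (k : ℕ) : 0 < oddDF k := by
  unfold oddDF; positivity

lemma oddDF_succ (k : ℕ) : oddDF (k + 1) = (2 * k + 3) * oddDF k := by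
  unfold oddDF
  have h1 : 2 * (k + 1) + 1 = (2 * k + 1) + 1 + 1 := by ring
  have h2 : ((2 * k + 1) + 1 + 1).factorial
      = ((2 * k + 1) + 1 + 1) * (((2 * k + 1) + 1) * (2 * k + 1).factorial) := by
    rw [Nat.factorial_succ, Nat.factorial_succ]
  have h3 : (k + 1).factorial = (k + 1) * k.factorial := Nat.factorial_succ k
  rw [h1, h2, h3, pow_succ]
  have hk : ((k:ℝ) + 1) ≠ 0 := by positivity
  have hf : (k.factorial : ℝ) ≠ 0 := by positivity
  push_cast
  field_simp
  ring

lemma factorial_le_oddDF (k : ℕ) : (k.factorial : ℝ) ≤ oddDF k := by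
  induction k with
  | zero => simp [oddDF]
  | succ n ih =>
    rw [oddDF_succ, Nat.factorial_succ]
    push_cast
    have h1 : (0:ℝ) ≤ n.factorial := by positivity
    have h2 : (n:ℝ) + 1 ≤ 2 * n + 3 := by linarith
    nlinarith [oddDF_pos n]

lemma two_add_one_le_three_pow (k : ℕ) : (2 * k + 1 : ℝ) ≤ 3 ^ k := by
  induction k with
  | zero => norm_num
  | succ n ih =>
    have : (3:ℝ) ^ (n + 1) = 3 * 3 ^ n := by ring
    push_cast
    push_cast at ih
    nlinarith

lemma summable_pow_div_oddDF (x : ℝ) : Summable (fun k => x ^ k / oddDF k) := by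
  apply Summable.of_norm_bounded (Real.summable_pow_div_factorial |x|)
  intro k
  rw [Real.norm_eq_abs, abs_div, abs_of_pos (oddDF_pos k), abs_pow]
  exact div_le_div_of_nonneg_left (by positivity) (by positivity) (factorial_le_oddDF k)

noncomputable def Sfun (y : ℝ) : ℝ := ∑' k : ℕ, y ^ (2 * k + 1) / oddDF k

lemma pow_odd (y : ℝ) (k : ℕ) : y ^ (2 * k + 1) = y * (y ^ 2) ^ k := by
  rw [pow_add, pow_mul, pow_one]; ring

lemma summable_Sfun (y : ℝ) : Summable (fun k : ℕ => y ^ (2 * k + 1) / oddDF k) := by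
  refine ((summable_pow_div_oddDF (y ^ 2)).mul_left y).congr fun k => ?_
  rw [pow_odd]; ring

lemma summable_Sderiv (y : ℝ) :
    Summable (fun k : ℕ => (2 * (k : ℝ) + 1) * y ^ (2 * k) / oddDF k) := by
  apply Summable.of_norm_bounded (Real.summable_pow_div_factorial (3 * y ^ 2))
  intro k
  rw [Real.norm_eq_abs, abs_div, abs_of_pos (oddDF_pos k), abs_mul, abs_pow]
  have h1 : |2 * (k : ℝ) + 1| = 2 * (k : ℝ) + 1 := abs_of_pos (by positivity)
  rw [h1]
  have h2 : (2 * (k : ℝ) + 1) * |y| ^ (2 * k) ≤ 3 ^ k * (y ^ 2) ^ k := by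
    have := two_add_one_le_three_pow k
    have hp : |y| ^ (2 * k) = (y ^ 2) ^ k := by
      rw [pow_mul, sq_abs]
    rw [hp]
    apply mul_le_mul_of_nonneg_right (by push_cast at this ⊢; linarith) (by positivity)
  calc (2 * (k : ℝ) + 1) * |y| ^ (2 * k) / oddDF k
      ≤ 3 ^ k * (y ^ 2) ^ k / (k.factorial : ℝ) := by
        apply div_le_div₀ (by positivity) h2 (by positivity) (factorial_le_oddDF k)
    _ = (3 * y ^ 2) ^ k / (k.factorial : ℝ) := by rw [mul_pow]

lemma hasDerivAt_Sfun (y : ℝ) :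
    HasDerivAt Sfun (∑' k : ℕ, (2 * (k : ℝ) + 1) * y ^ (2 * k) / oddDF k) y := by
  set R : ℝ := |y| + 1 with hR
  have hRpos : (0:ℝ) < R := by positivity
  have hy : y ∈ Metric.ball (0:ℝ) R := by
    simp only [Metric.mem_ball, dist_zero_right, Real.norm_eq_abs, hR]
    linarith
  refine hasDerivAt_tsum_of_isPreconnected
    (u := fun k => (3 * R ^ 2) ^ k / (k.factorial : ℝ))
    (g := fun k y => y ^ (2 * k + 1) / oddDF k)
    (g' := fun k x => (2 * (k : ℝ) + 1) * x ^ (2 * k) / oddDF k)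
    (Real.summable_pow_div_factorial _) Metric.isOpen_ball
    ((convex_ball (0:ℝ) R).isPreconnected) (fun k x _ => ?_) (fun k x hx => ?_)
    (Metric.mem_ball_self hRpos) ?_ hy
  · have h := (hasDerivAt_pow (2 * k + 1) x).div_const (oddDF k)
    refine h.congr_deriv ?_
    symm
    push_cast
    ring
  · rw [Real.norm_eq_abs, abs_div, abs_of_pos (oddDF_pos k), abs_mul, abs_pow,
      abs_of_pos (show (0:ℝ) < 2 * (k:ℝ) + 1 by positivity)]
    have hxR : |x| ≤ R := by
      simp only [Metric.mem_ball, dist_zero_right, Real.norm_eq_abs] at hx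
      linarith
    have h2 : (2 * (k : ℝ) + 1) * |x| ^ (2 * k) ≤ 3 ^ k * (R ^ 2) ^ k := by
      have h3 := two_add_one_le_three_pow k
      have hp : |x| ^ (2 * k) ≤ (R ^ 2) ^ k := by
        rw [← pow_mul]
        exact pow_le_pow_left₀ (abs_nonneg x) hxR _
      exact mul_le_mul h3 hp (by positivity) (by positivity)
    calc (2 * (k : ℝ) + 1) * |x| ^ (2 * k) / oddDF k
        ≤ 3 ^ k * (R ^ 2) ^ k / (k.factorial : ℝ) :=
          div_le_div₀ (by positivity) h2 (by positivity) (factorial_le_oddDF k)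
      _ = (3 * R ^ 2) ^ k / (k.factorial : ℝ) := by rw [mul_pow]
  · refine summable_zero.congr fun k => ?_
    simp [zero_pow]

lemma oddDF_zero : oddDF 0 = 1 := by simp [oddDF]

lemma Sfun_zero : Sfun 0 = 0 := by
  unfold Sfun
  rw [tsum_congr (fun k : ℕ => show (0:ℝ) ^ (2 * k + 1) / oddDF k = 0 by simp [zero_pow])]
  exact tsum_zero

lemma Sderiv_eq (y : ℝ) :
    ∑' k : ℕ, (2 * (k : ℝ) + 1) * y ^ (2 * k) / oddDF k = y * Sfun y + 1 := by
  rw [Summable.tsum_eq_zero_add (summable_Sderiv y)]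
  have h0 : (2 * ((0:ℕ) : ℝ) + 1) * y ^ (2 * 0) / oddDF 0 = 1 := by
    simp [oddDF_zero]
  rw [h0]
  have h1 : ∀ k : ℕ, (2 * ((k+1 : ℕ) : ℝ) + 1) * y ^ (2 * (k+1)) / oddDF (k+1)
      = y ^ (2 * k + 2) / oddDF k := by
    intro k
    rw [oddDF_succ]
    have : (2 * ((k+1 : ℕ) : ℝ) + 1) = (2 * (k:ℝ) + 3) := by push_cast; ring
    rw [this]
    have hne : (2 * (k:ℝ) + 3) ≠ 0 := by positivity
    have : 2 * (k + 1) = 2 * k + 2 := by ring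
    rw [this, mul_comm (2 * (k:ℝ) + 3) (oddDF k), ← div_div,
      mul_div_assoc, mul_div_cancel_left₀ _ hne]
  rw [tsum_congr h1]
  have h2 : y * Sfun y = ∑' k : ℕ, y ^ (2 * k + 2) / oddDF k := by
    unfold Sfun
    rw [← tsum_mul_left]
    refine tsum_congr fun k => ?_
    have e : y * y ^ (2 * k + 1) = y ^ (2 * k + 2) := by ring
    rw [← mul_div_assoc, e]
  rw [h2]
  ring

lemma erf_series (y : ℝ) :
    Real.exp (-y ^ 2 / 2) * Sfun y = ∫ s in (0:ℝ)..y, Real.exp (-s ^ 2 / 2) := by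
  have hcont : Continuous fun s : ℝ => Real.exp (-s ^ 2 / 2) := by fun_prop
  set K : ℝ → ℝ := fun y => Real.exp (-y ^ 2 / 2) * Sfun y
    - ∫ s in (0:ℝ)..y, Real.exp (-s ^ 2 / 2) with hKdef
  have hK : ∀ x : ℝ, HasDerivAt K 0 x := by
    intro x
    have h1 : HasDerivAt (fun y : ℝ => -y ^ 2 / 2) (-x) x := by
      have h := ((hasDerivAt_pow 2 x).neg).div_const 2
      refine h.congr_deriv ?_
      symm
      push_cast; ring
    have h2 : HasDerivAt (fun y : ℝ => Real.exp (-y ^ 2 / 2))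
        (Real.exp (-x ^ 2 / 2) * (-x)) x := (Real.hasDerivAt_exp _).comp x h1
    have h3 := hasDerivAt_Sfun x
    have h4 : HasDerivAt (fun y : ℝ => ∫ s in (0:ℝ)..y, Real.exp (-s ^ 2 / 2))
        (Real.exp (-x ^ 2 / 2)) x :=
      intervalIntegral.integral_hasDerivAt_right (hcont.intervalIntegrable _ _)
        (hcont.stronglyMeasurableAtFilter _ _) hcont.continuousAt
    have h5 := (h2.mul h3).sub h4
    refine h5.congr_deriv ?_
    symm
    rw [Sderiv_eq]
    ring
  have hconst := is_const_of_deriv_eq_zero (fun x => (hK x).differentiableAt)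
    (fun x => (hK x).deriv) y 0
  have hK0 : K 0 = 0 := by
    simp [hKdef, Sfun_zero]
  have : K y = 0 := by rw [hconst, hK0]
  simpa [hKdef, sub_eq_zero] using this

lemma regGammaP_nat (k : ℕ) (x : ℝ) :
    regGammaP ((k : ℝ) + 1) x
      = (∫ t in (0:ℝ)..x, t ^ k * Real.exp (-t)) / (k.factorial : ℝ) := by
  unfold regGammaP
  rw [Real.Gamma_nat_eq_factorial]
  congr 1
  refine intervalIntegral.integral_congr fun t _ => ?_
  have h1 : ((k : ℝ) + 1) - 1 = (k : ℝ) := by ring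
  rw [h1, Real.rpow_natCast]

lemma regGammaP_zero (a : ℝ) : regGammaP a 0 = 0 := by
  unfold regGammaP
  rw [intervalIntegral.integral_same, zero_div]

lemma term_hasDerivAt (r : ℝ) (k : ℕ) (x : ℝ) :
    HasDerivAt (fun h : ℝ => (evenDF k / oddDF k) *
        regGammaP ((k : ℝ) + 1) ((1 + r ^ 2) * h ^ 2 / 2) * (r ^ 2 / (1 + r ^ 2)) ^ k)
      ((1 + r ^ 2) * x * Real.exp (-((1 + r ^ 2) * x ^ 2 / 2)) * (r * x) ^ (2 * k) / oddDF k)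
      x := by
  have hr2 : (0:ℝ) < 1 + r ^ 2 := by positivity
  have hcont : Continuous fun t : ℝ => t ^ k * Real.exp (-t) := by fun_prop
  set q : ℝ := (1 + r ^ 2) * x ^ 2 / 2 with hqdef
  have hq : HasDerivAt (fun h : ℝ => (1 + r ^ 2) * h ^ 2 / 2) ((1 + r ^ 2) * x) x := by
    have hp := ((hasDerivAt_pow 2 x).const_mul (1 + r ^ 2)).div_const 2
    refine hp.congr_deriv ?_
    symm
    push_cast; ring
  have hI : HasDerivAt (fun u : ℝ => ∫ t in (0:ℝ)..u, t ^ k * Real.exp (-t))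
      (q ^ k * Real.exp (-q)) q :=
    intervalIntegral.integral_hasDerivAt_right (hcont.intervalIntegrable _ _)
      (hcont.stronglyMeasurableAtFilter _ _) hcont.continuousAt
  have hcomp := (hI.comp x hq).const_mul
      (evenDF k / oddDF k * (r ^ 2 / (1 + r ^ 2)) ^ k / (k.factorial : ℝ))
  have hfun : (fun h : ℝ => (evenDF k / oddDF k) *
        regGammaP ((k : ℝ) + 1) ((1 + r ^ 2) * h ^ 2 / 2) * (r ^ 2 / (1 + r ^ 2)) ^ k)
      = fun h : ℝ => evenDF k / oddDF k * (r ^ 2 / (1 + r ^ 2)) ^ k / (k.factorial : ℝ) *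
          ((fun u : ℝ => ∫ t in (0:ℝ)..u, t ^ k * Real.exp (-t))
            ((fun h : ℝ => (1 + r ^ 2) * h ^ 2 / 2) h)) := by
    funext z
    rw [regGammaP_nat]
    ring
  rw [hfun]
  refine hcomp.congr_deriv ?_
  symm
  unfold evenDF
  have hD : oddDF k ≠ 0 := (oddDF_pos k).ne'
  have hfac : (k.factorial : ℝ) ≠ 0 := by positivity
  have hrx : (r * x) ^ (2 * k) = (r ^ 2 * x ^ 2) ^ k := by
    rw [pow_mul]; ring_nf
  have h2 : (2:ℝ) ^ k * ((r ^ 2 / (1 + r ^ 2)) ^ k * q ^ k) = (r ^ 2 * x ^ 2) ^ k := by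
    rw [← mul_pow, ← mul_pow, hqdef]
    congr 1
    field_simp
  rw [hrx, ← h2]
  field_simp

lemma summable_main (r x : ℝ) : Summable (fun k : ℕ =>
    (1 + r ^ 2) * x * Real.exp (-((1 + r ^ 2) * x ^ 2 / 2)) * (r * x) ^ (2 * k) / oddDF k) := by
  refine ((summable_pow_div_oddDF ((r * x) ^ 2)).mul_left
    ((1 + r ^ 2) * x * Real.exp (-((1 + r ^ 2) * x ^ 2 / 2)))).congr fun k => ?_
  rw [← pow_mul]
  ring

lemma hasDerivAt_F (r x : ℝ) :
    HasDerivAt (fun h : ℝ => ∑' k : ℕ, (evenDF k / oddDF k) *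
        regGammaP ((k : ℝ) + 1) ((1 + r ^ 2) * h ^ 2 / 2) * (r ^ 2 / (1 + r ^ 2)) ^ k)
      (∑' k : ℕ, (1 + r ^ 2) * x * Real.exp (-((1 + r ^ 2) * x ^ 2 / 2)) * (r * x) ^ (2 * k)
        / oddDF k) x := by
  have hr2 : (0:ℝ) < 1 + r ^ 2 := by positivity
  set R : ℝ := |x| + 1 with hR
  have hRpos : (0:ℝ) < R := by positivity
  have hxR : x ∈ Metric.ball (0:ℝ) R := by
    simp only [Metric.mem_ball, dist_zero_right, Real.norm_eq_abs, hR]; linarith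
  refine hasDerivAt_tsum_of_isPreconnected
    (u := fun k => (1 + r ^ 2) * R * (r ^ 2 * R ^ 2) ^ k / (k.factorial : ℝ))
    (g' := fun k z => (1 + r ^ 2) * z * Real.exp (-((1 + r ^ 2) * z ^ 2 / 2))
      * (r * z) ^ (2 * k) / oddDF k)
    ?_ Metric.isOpen_ball ((convex_ball (0:ℝ) R).isPreconnected)
    (fun k z _ => term_hasDerivAt r k z) (fun k z hz => ?_)
    (Metric.mem_ball_self hRpos) ?_ hxR
  · refine ((Real.summable_pow_div_factorial (r ^ 2 * R ^ 2)).mul_left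
      ((1 + r ^ 2) * R)).congr fun k => ?_
    ring
  · have hzR : |z| ≤ R := by
      simp only [Metric.mem_ball, dist_zero_right, Real.norm_eq_abs] at hz; linarith
    have hexp : Real.exp (-((1 + r ^ 2) * z ^ 2 / 2)) ≤ 1 :=
      Real.exp_le_one_iff.mpr (neg_nonpos.mpr (by positivity))
    have hz2 : z ^ 2 ≤ R ^ 2 := by nlinarith [sq_abs z, abs_nonneg z]
    have hpow : |r * z| ^ (2 * k) ≤ (r ^ 2 * R ^ 2) ^ k := by
      rw [pow_mul, sq_abs]
      apply pow_le_pow_left₀ (by positivity)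
      nlinarith [sq_nonneg r, hz2]
    rw [Real.norm_eq_abs, abs_div, abs_of_pos (oddDF_pos k), abs_mul, abs_pow, abs_mul, abs_mul,
      abs_of_pos hr2, abs_of_pos (Real.exp_pos _)]
    calc (1 + r ^ 2) * |z| * Real.exp (-((1 + r ^ 2) * z ^ 2 / 2)) * |r * z| ^ (2 * k) / oddDF k
        ≤ (1 + r ^ 2) * R * 1 * (r ^ 2 * R ^ 2) ^ k / (k.factorial : ℝ) := by
          apply div_le_div₀ (by positivity) ?_ (by positivity) (factorial_le_oddDF k)
          have h1 : (1 + r ^ 2) * |z| ≤ (1 + r ^ 2) * R :=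
            mul_le_mul_of_nonneg_left hzR hr2.le
          have h2 : (1 + r ^ 2) * |z| * Real.exp (-((1 + r ^ 2) * z ^ 2 / 2))
              ≤ (1 + r ^ 2) * R * 1 := by
            apply mul_le_mul h1 hexp (Real.exp_pos _).le (by positivity)
          exact mul_le_mul h2 hpow (by positivity) (by positivity)
      _ = (1 + r ^ 2) * R * (r ^ 2 * R ^ 2) ^ k / (k.factorial : ℝ) := by rw [mul_one]
  · refine summable_zero.congr fun k => ?_
    symm
    norm_num [regGammaP_zero]

lemma hasDerivAt_OwenT (r x : ℝ) :
    HasDerivAt (fun h : ℝ => OwenT h r)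
      ((1 / (2 * Real.pi)) * ∫ t in (0:ℝ)..r, -x * Real.exp (-x ^ 2 * (1 + t ^ 2) / 2)) x := by
  have hden : ∀ t : ℝ, (0:ℝ) < 1 + t ^ 2 := fun t => by positivity
  have hcF : ∀ z : ℝ, Continuous fun t : ℝ => Real.exp (-z ^ 2 * (1 + t ^ 2) / 2) / (1 + t ^ 2) :=
    fun z => Continuous.div (by fun_prop) (by fun_prop) (fun t => (hden t).ne')
  have hcF' : Continuous fun t : ℝ => -x * Real.exp (-x ^ 2 * (1 + t ^ 2) / 2) := by fun_prop
  have hd := intervalIntegral.hasDerivAt_integral_of_dominated_loc_of_deriv_le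
    (F := fun z t => Real.exp (-z ^ 2 * (1 + t ^ 2) / 2) / (1 + t ^ 2))
    (F' := fun z t => -z * Real.exp (-z ^ 2 * (1 + t ^ 2) / 2))
    (bound := fun _ => |x| + 1) (a := 0) (b := r) (μ := volume) (x₀ := x)
    (Metric.ball_mem_nhds x one_pos)
    (Filter.Eventually.of_forall fun z => (hcF z).aestronglyMeasurable)
    ((hcF x).intervalIntegrable _ _)
    hcF'.aestronglyMeasurable
    (MeasureTheory.ae_of_all _ fun t _ z hz => ?_)
    (intervalIntegrable_const)
    (MeasureTheory.ae_of_all _ fun t _ z _ => ?_)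
  · exact hd.2.const_mul (1 / (2 * Real.pi))
  · have hz1 : |z| ≤ |x| + 1 := by
      have := mem_ball_iff_norm.mp hz
      calc |z| = |x + (z - x)| := by ring_nf
        _ ≤ |x| + |z - x| := abs_add_le _ _
        _ ≤ |x| + 1 := by
            rw [Real.norm_eq_abs] at this; linarith
    have hexp : Real.exp (-z ^ 2 * (1 + t ^ 2) / 2) ≤ 1 := by
      apply Real.exp_le_one_iff.mpr
      nlinarith [sq_nonneg z, hden t]
    rw [Real.norm_eq_abs, abs_mul, abs_neg]
    calc |z| * |Real.exp (-z ^ 2 * (1 + t ^ 2) / 2)|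
        ≤ (|x| + 1) * 1 := by
          apply mul_le_mul hz1 ?_ (abs_nonneg _) (by positivity)
          rw [abs_of_pos (Real.exp_pos _)]
          exact hexp
      _ = |x| + 1 := mul_one _
  · have h1 : HasDerivAt (fun z : ℝ => -z ^ 2 * (1 + t ^ 2) / 2)
        (-(2 * z) * (1 + t ^ 2) / 2) z := by
      have hp := (((hasDerivAt_pow 2 z).neg).mul_const (1 + t ^ 2)).div_const 2
      refine hp.congr_deriv ?_
      symm
      push_cast; ring
    have h2 := ((Real.hasDerivAt_exp _).comp z h1).div_const (1 + t ^ 2)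
    refine h2.congr_deriv ?_
    symm
    field_simp

theorem OwenT_series_P (h r : ℝ) :
    OwenT h r =
      Real.arctan r / (2 * Real.pi) -
        (r / (2 * Real.pi * (1 + r ^ 2))) *
          ∑' k : ℕ, (evenDF k / oddDF k) *
            regGammaP (k + 1) ((1 + r ^ 2) * h ^ 2 / 2) * (r ^ 2 / (1 + r ^ 2)) ^ k := by
  have hr2 : (0:ℝ) < 1 + r ^ 2 := by positivity
  have hπ : (0:ℝ) < 2 * Real.pi := by positivity
  set Δ : ℝ → ℝ := fun x => OwenT x r -
    (Real.arctan r / (2 * Real.pi) -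
      (r / (2 * Real.pi * (1 + r ^ 2))) *
        ∑' k : ℕ, (evenDF k / oddDF k) *
          regGammaP ((k : ℝ) + 1) ((1 + r ^ 2) * x ^ 2 / 2) * (r ^ 2 / (1 + r ^ 2)) ^ k)
    with hΔ
  have key : ∀ x : ℝ, HasDerivAt Δ 0 x := by
    intro x
    have hT := hasDerivAt_OwenT r x
    have hFd := hasDerivAt_F r x
    have hD := hT.sub ((hasDerivAt_const x (Real.arctan r / (2 * Real.pi))).sub
      (hFd.const_mul (r / (2 * Real.pi * (1 + r ^ 2)))))
    refine hD.congr_deriv ?_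
    symm
    -- abbreviations
    set e1 : ℝ := Real.exp (-x ^ 2 / 2) with he1
    set e2 : ℝ := Real.exp (-(r * x) ^ 2 / 2) with he2
    -- Step A : the integral in T'
    have stepsub : ∫ t in (0:ℝ)..r, x * Real.exp (-(x * t) ^ 2 / 2)
        = ∫ s in (0:ℝ)..(r * x), Real.exp (-s ^ 2 / 2) := by
      by_cases hx : x = 0
      · subst hx
        simp
      · have hcml := intervalIntegral.integral_comp_mul_left
          (a := (0:ℝ)) (b := r) (c := x) (f := fun s => Real.exp (-s ^ 2 / 2)) hx
        rw [intervalIntegral.integral_const_mul, hcml]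
        rw [mul_zero, smul_eq_mul, mul_comm x r]
        field_simp
    have stepA : ∫ t in (0:ℝ)..r, -x * Real.exp (-x ^ 2 * (1 + t ^ 2) / 2)
        = -(e1 * ∫ s in (0:ℝ)..(r * x), Real.exp (-s ^ 2 / 2)) := by
      have hcongr : ∀ t ∈ Set.uIcc (0:ℝ) r, -x * Real.exp (-x ^ 2 * (1 + t ^ 2) / 2)
          = (-e1) * (x * Real.exp (-(x * t) ^ 2 / 2)) := by
        intro t _
        have hsplit : Real.exp (-x ^ 2 * (1 + t ^ 2) / 2)
            = e1 * Real.exp (-(x * t) ^ 2 / 2) := by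
          rw [he1, ← Real.exp_add]
          congr 1
          ring
        rw [hsplit]
        ring
      rw [intervalIntegral.integral_congr hcongr, intervalIntegral.integral_const_mul, stepsub]
      ring
    -- Step B : the tsum in F'
    have stepB : (∑' k : ℕ, (1 + r ^ 2) * x * Real.exp (-((1 + r ^ 2) * x ^ 2 / 2))
          * (r * x) ^ (2 * k) / oddDF k)
        = (1 + r ^ 2) * x * (e1 * e2) * ∑' k : ℕ, (r * x) ^ (2 * k) / oddDF k := by
      rw [← tsum_mul_left]
      refine tsum_congr fun k => ?_
      have : Real.exp (-((1 + r ^ 2) * x ^ 2 / 2)) = e1 * e2 := by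
        rw [he1, he2, ← Real.exp_add]
        congr 1
        ring
      rw [this]
      ring
    have stepC : (r * x) * ∑' k : ℕ, (r * x) ^ (2 * k) / oddDF k = Sfun (r * x) := by
      unfold Sfun
      rw [← tsum_mul_left]
      refine tsum_congr fun k => ?_
      rw [pow_odd, ← pow_mul]
      ring
    have stepD : e2 * Sfun (r * x) = ∫ s in (0:ℝ)..(r * x), Real.exp (-s ^ 2 / 2) :=
      erf_series (r * x)
    -- combine
    set T2 : ℝ := ∑' k : ℕ, (r * x) ^ (2 * k) / oddDF k with hT2
    set J : ℝ := ∫ s in (0:ℝ)..(r * x), Real.exp (-s ^ 2 / 2) with hJ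
    have hcomb : e2 * (r * x * T2) = J := by rw [stepC, stepD]
    rw [stepA, stepB]
    have hπ' : (2 * Real.pi) ≠ 0 := hπ.ne'
    have hr2' : (1 + r ^ 2) ≠ 0 := hr2.ne'
    rw [← hcomb]
    field_simp
    ring
  have hconst := is_const_of_deriv_eq_zero (fun x => (key x).differentiableAt)
    (fun x => (key x).deriv) h 0
  have hΔ0 : Δ 0 = 0 := by
    rw [hΔ]
    simp only
    have hO : OwenT 0 r = Real.arctan r / (2 * Real.pi) := by
      unfold OwenT
      have : ∀ t ∈ Set.uIcc (0:ℝ) r, Real.exp (-(0:ℝ) ^ 2 * (1 + t ^ 2) / 2) / (1 + t ^ 2)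
          = 1 / (1 + t ^ 2) := by
        intro t _
        norm_num
      rw [intervalIntegral.integral_congr this, integral_one_div_one_add_sq, Real.arctan_zero]
      ring
    have hF0 : (∑' k : ℕ, (evenDF k / oddDF k) *
        regGammaP ((k : ℝ) + 1) ((1 + r ^ 2) * (0:ℝ) ^ 2 / 2) * (r ^ 2 / (1 + r ^ 2)) ^ k) = 0 := by
      rw [tsum_congr (fun k : ℕ => show (evenDF k / oddDF k) *
          regGammaP ((k : ℝ) + 1) ((1 + r ^ 2) * (0:ℝ) ^ 2 / 2) * (r ^ 2 / (1 + r ^ 2)) ^ k = 0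
        by norm_num [regGammaP_zero])]
      exact tsum_zero
    rw [hO, hF0]
    ring
  have : Δ h = 0 := by rw [hconst, hΔ0]
  rw [hΔ] at this
  simp only at this
  linarith [this]
end
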